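/- With the T₃ coordinate map x'₂ᵢ = x₂ᵢ₋₂(x₂ᵢ₋₄ + x₂ᵢ₋₁ − 1)/(x₂ᵢ₋₂x₂ᵢ₋₁ − (1−x₂ᵢ₊₁)(1−x₂ᵢ₋₄)), x'₂ᵢ₊₁ = x₂ᵢ₊₃(x₂ᵢ₊₂ + x₂ᵢ₊₅ − 1)/(x₂ᵢ₊₂x₂ᵢ₊₃ − (1−x₂ᵢ₊₅)(1−x₂ᵢ)) on 2n-periodic sequences, the quantity 𝓕₁ = ∏ᵢ₌₀ⁿ⁻¹ x₂ᵢ/(x₂ᵢ − 1) satisfies ∏ᵢ x'₂ᵢ/(x'₂ᵢ − 1) = ∏ᵢ x₂ᵢ/(x₂ᵢ − 1), provided all denominators are nonzero. -/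

import Mathlib

open scoped BigOperators

/-- A product over one full period of a periodic function is invariant under
shifting the argument by one. -/
private lemma shift_one (n : ℕ) (g : ℤ → ℝ) (hg : ∀ j : ℤ, g (j + n) = g j) :
    ∏ i ∈ Finset.range n, g (i + 1) = ∏ i ∈ Finset.range n, g i := by
  cases n with
  | zero => simp
  | succ m =>
    rw [Finset.prod_range_succ, Finset.prod_range_succ']
    have h1 : ((m : ℤ) + 1) = (0 : ℤ) + ((m + 1 : ℕ) : ℤ) := by push_cast; ring
    rw [h1, hg 0]
    push_cast
    rfl

/-- A product over one full period of a periodic function is invariant under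
shifting the argument by any integer. -/
private lemma shift_int (n : ℕ) (g : ℤ → ℝ) (hg : ∀ j : ℤ, g (j + n) = g j) (c : ℤ) :
    ∏ i ∈ Finset.range n, g (i + c) = ∏ i ∈ Finset.range n, g i := by
  induction c using Int.induction_on with
  | zero => simp
  | succ k ih =>
    have h := shift_one n (fun j => g (j + k)) (by
      intro j
      show g (j + (n : ℤ) + k) = g (j + k)
      rw [show j + (n : ℤ) + k = (j + k) + n by ring, hg])
    calc ∏ i ∈ Finset.range n, g (i + ((k : ℤ) + 1))
        = ∏ i ∈ Finset.range n, g (((i : ℤ) + 1) + k) := by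
          apply Finset.prod_congr rfl; intro i _; congr 1; ring
      _ = ∏ i ∈ Finset.range n, g ((i : ℤ) + k) := h
      _ = _ := ih
  | pred k ih =>
    have h := shift_one n (fun j => g (j + (-(k : ℤ) - 1))) (by
      intro j
      show g (j + (n : ℤ) + (-(k : ℤ) - 1)) = g (j + (-(k : ℤ) - 1))
      rw [show j + (n : ℤ) + (-(k : ℤ) - 1) = (j + (-(k : ℤ) - 1)) + n by ring, hg])
    calc ∏ i ∈ Finset.range n, g (i + (-(k : ℤ) - 1))
        = ∏ i ∈ Finset.range n, g (((i : ℤ) + 1) + (-(k : ℤ) - 1)) := by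
          rw [h]
      _ = ∏ i ∈ Finset.range n, g ((i : ℤ) + (-(k : ℤ))) := by
          apply Finset.prod_congr rfl; intro i _; congr 1; ring
      _ = _ := ih

theorem stmt14 (n : ℕ) (hn : 2 ≤ n) (x x' : ℤ → ℝ)
    (hper : ∀ j : ℤ, x (j + 2*n) = x j)
    (hdenom_even : ∀ i : ℤ,
      x (2*i-2) * x (2*i-1) - (1 - x (2*i+1)) * (1 - x (2*i-4)) ≠ 0)
    (hdenom_odd : ∀ i : ℤ,
      x (2*i+2) * x (2*i+3) - (1 - x (2*i+5)) * (1 - x (2*i)) ≠ 0)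
    (hx_even : ∀ i : ℤ, x (2*i) - 1 ≠ 0)
    (hx'_even : ∀ i : ℤ, x' (2*i) - 1 ≠ 0)
    (heven : ∀ i : ℤ, x' (2*i) =
      x (2*i-2) * (x (2*i-4) + x (2*i-1) - 1)
        / (x (2*i-2) * x (2*i-1) - (1 - x (2*i+1)) * (1 - x (2*i-4))))
    (hodd : ∀ i : ℤ, x' (2*i+1) =
      x (2*i+3) * (x (2*i+2) + x (2*i+5) - 1)
        / (x (2*i+2) * x (2*i+3) - (1 - x (2*i+5)) * (1 - x (2*i)))) :
    ∏ i ∈ Finset.range n, x' (2*i) / (x' (2*i) - 1)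
      = ∏ i ∈ Finset.range n, x (2*i) / (x (2*i) - 1) := by
  -- abbreviations (as statements about x)
  -- the factored "numerator minus denominator":
  have hfac : ∀ j : ℤ,
      x (2*j-2) * (x (2*j-4) + x (2*j-1) - 1)
        - (x (2*j-2) * x (2*j-1) - (1 - x (2*j+1)) * (1 - x (2*j-4)))
      = (x (2*j-4) - 1) * (x (2*j-2) + x (2*j+1) - 1) := by
    intro j; ring
  have e2 : ∀ j : ℤ, x' (2*j) - 1 =
      ((x (2*j-4) - 1) * (x (2*j-2) + x (2*j+1) - 1))
        / (x (2*j-2) * x (2*j-1) - (1 - x (2*j+1)) * (1 - x (2*j-4))) := by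
    intro j
    rw [heven j, div_sub_one (hdenom_even j), hfac j]
  have hM : ∀ j : ℤ, (x (2*j-4) - 1) * (x (2*j-2) + x (2*j+1) - 1) ≠ 0 := by
    intro j h
    apply hx'_even j
    rw [e2 j, h, zero_div]
  have hfne : ∀ j : ℤ, x (2*j-2) + x (2*j+1) - 1 ≠ 0 := by
    intro j h
    exact hM j (by rw [h, mul_zero])
  -- the key pointwise identity
  have key : ∀ j : ℤ, x' (2*j) / (x' (2*j) - 1)
      = (x (2*(j-1)) * (x (2*(j-1)-2) + x (2*(j-1)+1) - 1))
        / ((x (2*(j-2)) - 1) * (x (2*j-2) + x (2*j+1) - 1)) := by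
    intro j
    have harg1 : (2:ℤ)*(j-1)-2 = 2*j-4 := by ring
    have harg2 : (2:ℤ)*(j-1)+1 = 2*j-1 := by ring
    have harg3 : (2:ℤ)*(j-1) = 2*j-2 := by ring
    have harg4 : (2:ℤ)*(j-2) = 2*j-4 := by ring
    rw [harg1, harg2, harg3, harg4, e2 j, heven j,
      div_div_div_cancel_right₀]
    exact hdenom_even j
  -- periodicity of the building blocks (period n in the half-index)
  have hperU : ∀ j : ℤ, (fun k : ℤ => x (2*k)) (j + n) = (fun k : ℤ => x (2*k)) j := by
    intro j
    show x (2*(j + (n:ℤ))) = x (2*j)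
    rw [show 2*(j + (n:ℤ)) = 2*j + 2*n by ring]; exact hper _
  have hperV : ∀ j : ℤ,
      (fun k : ℤ => x (2*k) - 1) (j + n) = (fun k : ℤ => x (2*k) - 1) j := by
    intro j
    show x (2*(j + (n:ℤ))) - 1 = x (2*j) - 1
    rw [show 2*(j + (n:ℤ)) = 2*j + 2*n by ring, hper]
  have hperF : ∀ j : ℤ,
      (fun k : ℤ => x (2*k-2) + x (2*k+1) - 1) (j + n)
        = (fun k : ℤ => x (2*k-2) + x (2*k+1) - 1) j := by
    intro j
    show x (2*(j + (n:ℤ))-2) + x (2*(j + (n:ℤ))+1) - 1 = x (2*j-2) + x (2*j+1) - 1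
    rw [show 2*(j + (n:ℤ))-2 = (2*j-2) + 2*n by ring,
        show 2*(j + (n:ℤ))+1 = (2*j+1) + 2*n by ring, hper, hper]
  -- shifted products equal unshifted ones
  have hA : ∏ i ∈ Finset.range n, x (2*((i:ℤ)-1)) = ∏ i ∈ Finset.range n, x (2*(i:ℤ)) := by
    have := shift_int n (fun k : ℤ => x (2*k)) hperU (-1)
    simpa only [← sub_eq_add_neg] using this
  have hB : ∏ i ∈ Finset.range n, (x (2*((i:ℤ)-2)) - 1)
      = ∏ i ∈ Finset.range n, (x (2*(i:ℤ)) - 1) := by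
    have := shift_int n (fun k : ℤ => x (2*k) - 1) hperV (-2)
    simpa only [← sub_eq_add_neg] using this
  have hC : ∏ i ∈ Finset.range n, (x (2*((i:ℤ)-1)-2) + x (2*((i:ℤ)-1)+1) - 1)
      = ∏ i ∈ Finset.range n, (x (2*(i:ℤ)-2) + x (2*(i:ℤ)+1) - 1) := by
    have := shift_int n (fun k : ℤ => x (2*k-2) + x (2*k+1) - 1) hperF (-1)
    simpa only [← sub_eq_add_neg] using this
  have hFprod : ∏ i ∈ Finset.range n, (x (2*(i:ℤ)-2) + x (2*(i:ℤ)+1) - 1) ≠ 0 := by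
    rw [Finset.prod_ne_zero_iff]
    intro i _
    exact hfne i
  calc ∏ i ∈ Finset.range n, x' (2*(i:ℤ)) / (x' (2*(i:ℤ)) - 1)
      = ∏ i ∈ Finset.range n,
          (x (2*((i:ℤ)-1)) * (x (2*((i:ℤ)-1)-2) + x (2*((i:ℤ)-1)+1) - 1))
            / ((x (2*((i:ℤ)-2)) - 1) * (x (2*(i:ℤ)-2) + x (2*(i:ℤ)+1) - 1)) := by
        exact Finset.prod_congr rfl fun i _ => key i
    _ = (∏ i ∈ Finset.range n,
          x (2*((i:ℤ)-1)) * (x (2*((i:ℤ)-1)-2) + x (2*((i:ℤ)-1)+1) - 1))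
        / ∏ i ∈ Finset.range n,
          (x (2*((i:ℤ)-2)) - 1) * (x (2*(i:ℤ)-2) + x (2*(i:ℤ)+1) - 1) :=
        Finset.prod_div_distrib _ _
    _ = ((∏ i ∈ Finset.range n, x (2*((i:ℤ)-1)))
          * ∏ i ∈ Finset.range n, (x (2*((i:ℤ)-1)-2) + x (2*((i:ℤ)-1)+1) - 1))
        / ((∏ i ∈ Finset.range n, (x (2*((i:ℤ)-2)) - 1))
          * ∏ i ∈ Finset.range n, (x (2*(i:ℤ)-2) + x (2*(i:ℤ)+1) - 1)) := by
        rw [Finset.prod_mul_distrib, Finset.prod_mul_distrib]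
    _ = ((∏ i ∈ Finset.range n, x (2*(i:ℤ)))
          * ∏ i ∈ Finset.range n, (x (2*(i:ℤ)-2) + x (2*(i:ℤ)+1) - 1))
        / ((∏ i ∈ Finset.range n, (x (2*(i:ℤ)) - 1))
          * ∏ i ∈ Finset.range n, (x (2*(i:ℤ)-2) + x (2*(i:ℤ)+1) - 1)) := by
        rw [hA, hB, hC]
    _ = (∏ i ∈ Finset.range n, x (2*(i:ℤ)))
        / (∏ i ∈ Finset.range n, (x (2*(i:ℤ)) - 1)) :=
        mul_div_mul_right _ _ hFprod
    _ = ∏ i ∈ Finset.range n, x (2*(i:ℤ)) / (x (2*(i:ℤ)) - 1) :=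
        (Finset.prod_div_distrib _ _).symm
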